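/- Let G be a finitely generated group acting 3-discontinuously and 3-cocompactly on a compactum T without isolated points. Then every point of T is a conical limit point. In particular the action has no parabolic points. -/

import Mathlib

open Filter Topology

/-- The set of ordered triples of pairwise distinct points of `T`
(a model for the space `Θ³T` of distinct triples). -/
def distinctTriples (T : Type) : Set (T × T × T) :=
  {x | x.1 ≠ x.2.1 ∧ x.1 ≠ x.2.2 ∧ x.2.1 ≠ x.2.2}

/-- Diagonal action of a group element on triples. -/
def tripleSmul {G T : Type} [Group G] [MulAction G T] (g : G) (x : T × T × T) :
    T × T × T :=
  (g • x.1, g • x.2.1, g • x.2.2)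

/-- The action of `G` on `T` is 3-discontinuous (convergence property): the
induced action on the space of distinct triples is properly discontinuous. -/
def ThreeDiscontinuous (G T : Type) [Group G] [MulAction G T]
    [TopologicalSpace T] : Prop :=
  ∀ K L : Set (T × T × T), K ⊆ distinctTriples T → L ⊆ distinctTriples T →
    IsCompact K → IsCompact L →
    {g : G | (tripleSmul g '' K ∩ L).Nonempty}.Finite

/-- The action of `G` on `T` is 3-cocompact: `Θ³T / G` is compact, i.e. there is
a compact fundamental set for the action on distinct triples. -/
def ThreeCocompact (G T : Type) [Group G] [MulAction G T]
    [TopologicalSpace T] : Prop :=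
  ∃ K : Set (T × T × T), K ⊆ distinctTriples T ∧ IsCompact K ∧
    ∀ x ∈ distinctTriples T, ∃ g : G, tripleSmul g x ∈ K

/-- The action of `G` on `T` is 2-cocompact: there is a compact fundamental set
for the action on pairs of distinct points. -/
def TwoCocompact (G T : Type) [Group G] [MulAction G T]
    [TopologicalSpace T] : Prop :=
  ∃ K : Set (T × T), K ⊆ {x | x.1 ≠ x.2} ∧ IsCompact K ∧
    ∀ x : T × T, x.1 ≠ x.2 → ∃ g : G, (g • x.1, g • x.2) ∈ K

/-- `x` is a conical (limit) point for the action of `G` on `T`: there are an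
injective sequence `gₙ` in `G` and distinct points `a ≠ b` with `gₙ • y → a`
for every `y ≠ x` and `gₙ • x → b`. -/
def IsConical (G : Type) {T : Type} [Group G] [MulAction G T]
    [TopologicalSpace T] (x : T) : Prop :=
  ∃ (g : ℕ → G) (a b : T), Function.Injective g ∧ a ≠ b ∧
    (∀ y : T, y ≠ x → Tendsto (fun n => g n • y) atTop (nhds a)) ∧
    Tendsto (fun n => g n • x) atTop (nhds b)

/-- `x` is a limit point of the subgroup `H` acting on `T`: some orbit
accumulates at `x` along an injective sequence in `H`. -/
def IsLimitPointOf {G T : Type} [Group G] [MulAction G T] [TopologicalSpace T]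
    (H : Subgroup G) (x : T) : Prop :=
  ∃ u : ℕ → H, Function.Injective u ∧
    ∃ t : T, Tendsto (fun n => (u n : G) • t) atTop (nhds x)

/-- `p` is a parabolic point: the limit set of its stabilizer is exactly `{p}`. -/
def IsParabolicPt (G : Type) {T : Type} [Group G] [MulAction G T]
    [TopologicalSpace T] (p : T) : Prop :=
  {x : T | IsLimitPointOf (MulAction.stabilizer G p) x} = {p}

section Stmt14Aux

lemma auxCountableOfFG (G : Type) [Group G] [Group.FG G] : Countable G := by
  obtain ⟨S, hSc, hSf⟩ := Group.fg_iff.mp ‹Group.FG G›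
  have hS' : (S ∪ S⁻¹).Finite := hSf.union hSf.inv
  haveI : Countable ↥(S ∪ S⁻¹) := hS'.countable.to_subtype
  have hsurj : Function.Surjective
      (fun l : List ↥(S ∪ S⁻¹) => (l.map Subtype.val).prod) := by
    intro g
    have h1 : g ∈ Subgroup.closure S := hSc ▸ Subgroup.mem_top g
    have h2 : g ∈ Submonoid.closure (S ∪ S⁻¹) := by
      rw [← Subgroup.closure_toSubmonoid]; exact h1
    obtain ⟨l, hl, hp⟩ := Submonoid.exists_list_of_mem_closure h2
    refine ⟨l.attach.map fun a => (⟨a.1, hl a.1 a.2⟩ : ↥(S ∪ S⁻¹)), ?_⟩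
    simp only [List.map_map]
    have : (Subtype.val ∘ fun a : {x // x ∈ l} =>
        (⟨a.1, hl a.1 a.2⟩ : ↥(S ∪ S⁻¹))) = fun a : {x // x ∈ l} => a.1 := rfl
    rw [this, List.attach_map_subtype_val]
    exact hp
  exact hsurj.countable

lemma auxInjSubseq {α : Type} (f : ℕ → α) (hf : (Set.range f).Infinite) :
    ∃ φ : ℕ → ℕ, StrictMono φ ∧ Function.Injective (f ∘ φ) := by
  classical
  have hex : ∀ n : ℕ, ∃ m : ℕ, f m ∉ f '' (Set.Iic n) := by
    intro n
    by_contra h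
    push_neg at h
    exact hf (((Set.finite_Iic n).image f).subset (by rintro _ ⟨m, rfl⟩; exact h m))
  let φ : ℕ → ℕ := fun n => Nat.rec 0 (fun _ prev => Nat.find (hex prev)) n
  have hstep : ∀ n, φ (n + 1) = Nat.find (hex (φ n)) := fun n => rfl
  have hnotmem : ∀ n, f (φ (n + 1)) ∉ f '' (Set.Iic (φ n)) := by
    intro n; rw [hstep]; exact Nat.find_spec (hex (φ n))
  have hlt : ∀ n, φ n < φ (n + 1) := by
    intro n
    by_contra h
    push_neg at h
    exact hnotmem n ⟨φ (n + 1), h, rfl⟩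
  have hmono : StrictMono φ := strictMono_nat_of_lt_succ hlt
  refine ⟨φ, hmono, ?_⟩
  have hne : ∀ m n, m < n → f (φ m) ≠ f (φ n) := by
    intro m n hmn heq
    obtain ⟨k, rfl⟩ : ∃ k, n = k + 1 := ⟨n - 1, by omega⟩
    exact hnotmem k ⟨φ m, hmono.monotone (by omega), heq⟩
  intro m n heq
  by_contra hne'
  rcases lt_or_gt_of_ne hne' with hc | hc
  · exact hne m n hc heq
  · exact hne n m hc heq.symm

end Stmt14Aux

section Stmt14Aux2

variable {G T : Type} [Group G] [MulAction G T] [TopologicalSpace T]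
  [CompactSpace T] [T2Space T]

lemma auxFirstCountable [Countable G]
    (hcont : ∀ g : G, Continuous (fun t : T => g • t))
    (h3c : ThreeCocompact G T)
    (hbig : ∀ u : T, ∃ c : T, c ≠ u) :
    FirstCountableTopology T := by
  constructor
  intro u
  obtain ⟨c, hc⟩ := hbig u
  obtain ⟨K, hKD, hKcomp, hKfund⟩ := h3c
  haveI : Nonempty G := ⟨1⟩
  obtain ⟨e, he⟩ := exists_surjective_nat G
  set F : ℕ → Set T := fun m => {v | tripleSmul (e m) (u, v, c) ∈ K} with hF
  have hFclosed : ∀ m, IsClosed (F m) := by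
    intro m
    have hco : Continuous fun v : T => ((e m • u : T), (e m • v, e m • c)) :=
      Continuous.prodMk continuous_const (Continuous.prodMk (hcont (e m)) continuous_const)
    exact IsClosed.preimage hco hKcomp.isClosed
  set O : ℕ → Set T := fun m => (F m)ᶜ ∩ {c}ᶜ with hO
  have hOopen : ∀ m, IsOpen (O m) :=
    fun m => ((hFclosed m).isOpen_compl).inter isClosed_singleton.isOpen_compl
  have hOu : ∀ m, u ∈ O m := by
    intro m
    constructor
    · intro hu
      exact (hKD hu).1 rfl
    · simpa using hc.symm
  have hOinter : (⋂ m, O m) = {u} := by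
    ext v
    constructor
    · intro hv
      by_contra hvu
      have hvu' : v ≠ u := hvu
      have hvc : v ≠ c := by
        have := (Set.mem_iInter.mp hv 0).2
        simpa using this
      have hmemD : (u, v, c) ∈ distinctTriples T :=
        ⟨Ne.symm hvu', Ne.symm hc, hvc⟩
      obtain ⟨g, hg⟩ := hKfund _ hmemD
      obtain ⟨m, rfl⟩ := he g
      exact (Set.mem_iInter.mp hv m).1 hg
    · rintro rfl
      exact Set.mem_iInter.mpr hOu
  have hCex : ∀ m, ∃ C : Set T, C ∈ 𝓝 u ∧ IsClosed C ∧ C ⊆ O m := by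
    intro m
    obtain ⟨C, ⟨h1, h2⟩, h3⟩ :=
      (closed_nhds_basis u).mem_iff.mp ((hOopen m).mem_nhds (hOu m))
    exact ⟨C, h1, h2, h3⟩
  choose C hCn hCcl hCsub using hCex
  set Dm : ℕ → Set T := fun m => ⋂ i ∈ Finset.range (m + 1), C i with hDm
  have hDn : ∀ m, Dm m ∈ 𝓝 u :=
    fun m => (Filter.biInter_finset_mem _).mpr fun i _ => hCn i
  have hDcl : ∀ m, IsClosed (Dm m) :=
    fun m => isClosed_biInter fun i _ => hCcl i
  have hDanti : ∀ m, Dm (m + 1) ⊆ Dm m := by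
    intro m v hv
    simp only [hDm, Set.mem_iInter] at hv ⊢
    intro i hi
    exact hv i (Finset.mem_range.mpr (by have := Finset.mem_range.mp hi; omega))
  have hDsub : ∀ m, Dm m ⊆ C m := by
    intro m v hv
    simp only [hDm, Set.mem_iInter] at hv
    exact hv m (Finset.mem_range.mpr (by omega))
  have hbasis : (𝓝 u).HasBasis (fun _ : ℕ => True) Dm := by
    constructor
    intro t
    simp only [true_and]
    constructor
    · intro ht
      have hus : u ∈ interior t := mem_interior_iff_mem_nhds.mpr ht
      by_contra hcon
      push_neg at hcon
      have hne : ∀ m, (Dm m ∩ (interior t)ᶜ).Nonempty := by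
        intro m
        have : ¬ Dm m ⊆ t := fun hsub => (hcon m) hsub
        have h2 : ¬ Dm m ⊆ interior t := fun hsub => this (hsub.trans interior_subset)
        rcases Set.not_subset.mp h2 with ⟨v, hv1, hv2⟩
        exact ⟨v, hv1, hv2⟩
      have hclos : ∀ m, IsClosed (Dm m ∩ (interior t)ᶜ) :=
        fun m => (hDcl m).inter isOpen_interior.isClosed_compl
      obtain ⟨v, hv⟩ :=
        IsCompact.nonempty_iInter_of_sequence_nonempty_isCompact_isClosed
          (fun m => Dm m ∩ (interior t)ᶜ)
          (fun m => Set.inter_subset_inter_left _ (hDanti m)) hne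
          ((hclos 0).isCompact) hclos
      have hvO : v ∈ ⋂ m, O m :=
        Set.mem_iInter.mpr fun m => (hCsub m) (hDsub m (Set.mem_iInter.mp hv m).1)
      rw [hOinter] at hvO
      have : v ∈ (interior t)ᶜ := (Set.mem_iInter.mp hv 0).2
      rw [hvO] at this
      exact this hus
    · rintro ⟨m, hsub⟩
      exact Filter.mem_of_superset (hDn m) hsub
  exact hbasis.isCountablyGenerated

end Stmt14Aux2

/-- if a finitely generated group `G` acts 3-discontinuously and
3-cocompactly on a compactum `T` without isolated points, then every point of
`T` is a conical limit point (in particular there are no parabolic points). -/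
theorem stmt14 {G T : Type} [Group G] [Group.FG G]
    [TopologicalSpace T] [CompactSpace T] [T2Space T] [MulAction G T]
    (hcont : ∀ g : G, Continuous (fun x : T => g • x))
    (h3 : ThreeDiscontinuous G T)
    (h3c : ThreeCocompact G T)
    (hni : ∀ x : T, ¬ IsOpen ({x} : Set T)) :
    ∀ x : T, IsConical G x := by
  classical
  haveI hGc : Countable G := auxCountableOfFG G
  have hbig : ∀ u : T, ∃ c : T, c ≠ u := by
    intro u
    by_contra hcon
    push_neg at hcon
    refine hni u ?_
    have : ({u} : Set T) = Set.univ := Set.eq_univ_iff_forall.mpr fun v => hcon v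
    rw [this]
    exact isOpen_univ
  haveI : FirstCountableTopology T := auxFirstCountable hcont h3c hbig
  have hDopen : IsOpen (distinctTriples T) := by
    have h1 : IsOpen {p : T × T × T | p.1 ≠ p.2.1} :=
      isOpen_ne_fun continuous_fst (continuous_fst.comp continuous_snd)
    have h2 : IsOpen {p : T × T × T | p.1 ≠ p.2.2} :=
      isOpen_ne_fun continuous_fst (continuous_snd.comp continuous_snd)
    have h3' : IsOpen {p : T × T × T | p.2.1 ≠ p.2.2} :=
      isOpen_ne_fun (continuous_fst.comp continuous_snd)
        (continuous_snd.comp continuous_snd)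
    exact (h1.inter (h2.inter h3') : _)
  obtain ⟨K, hKD, hKcomp, hKfund⟩ := h3c
  have hKclosed : IsClosed K := hKcomp.isClosed
  have hTcont : ∀ g : G, Continuous (tripleSmul g : T × T × T → T × T × T) := by
    intro g
    have : Continuous fun p : T × T × T => ((g • p.1 : T), (g • p.2.1, g • p.2.2)) :=
      Continuous.prodMk ((hcont g).comp continuous_fst)
        (Continuous.prodMk ((hcont g).comp (continuous_fst.comp continuous_snd))
          ((hcont g).comp (continuous_snd.comp continuous_snd)))
    exact this
  intro x
  obtain ⟨w, hwx⟩ := hbig x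
  obtain ⟨s, hs⟩ := (𝓝 x).exists_antitone_basis
  have hyex : ∀ n : ℕ, ∃ y : T, y ∈ s n ∧ y ≠ x ∧ y ≠ w := by
    intro n
    have hOopen : IsOpen (interior (s n) ∩ {w}ᶜ) :=
      isOpen_interior.inter isClosed_singleton.isOpen_compl
    have hxO : x ∈ interior (s n) ∩ {w}ᶜ :=
      ⟨mem_interior_iff_mem_nhds.mpr (hs.mem n),
        Set.mem_compl_singleton_iff.mpr (Ne.symm hwx)⟩
    have hv : ∃ v ∈ interior (s n) ∩ {w}ᶜ, v ≠ x := by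
      by_contra hno
      push_neg at hno
      refine hni x ?_
      have heq : interior (s n) ∩ {w}ᶜ = {x} :=
        Set.eq_singleton_iff_unique_mem.mpr ⟨hxO, fun v hv => hno v hv⟩
      rw [← heq]
      exact hOopen
    obtain ⟨v, hvO, hvx⟩ := hv
    exact ⟨v, interior_subset hvO.1, hvx, Set.mem_compl_singleton_iff.mp hvO.2⟩
  choose y hy1 hy2 hy3 using hyex
  have hytend : Tendsto y atTop (𝓝 x) := hs.tendsto hy1
  have hmemD : ∀ n, (x, y n, w) ∈ distinctTriples T :=
    fun n => ⟨Ne.symm (hy2 n), Ne.symm hwx, hy3 n⟩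
  have hhex : ∀ n, ∃ g : G, tripleSmul g (x, y n, w) ∈ K :=
    fun n => hKfund _ (hmemD n)
  choose h hh using hhex
  have hrange : (Set.range h).Infinite := by
    intro hfin
    have hgex : ∃ g ∈ Set.range h, {n : ℕ | h n = g}.Infinite := by
      by_contra hno
      push_neg at hno
      have huniv : (Set.univ : Set ℕ).Finite := by
        have hcover : (Set.univ : Set ℕ) ⊆ ⋃ g ∈ Set.range h, {n | h n = g} := by
          intro n _
          exact Set.mem_biUnion ⟨n, rfl⟩ rfl
        exact ((hfin.biUnion fun g hg => hno g hg).subset hcover)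
      exact Set.infinite_univ huniv
    obtain ⟨g, _, hinf⟩ := hgex
    obtain ⟨φ, hφ, hφg⟩ :=
      extraction_of_frequently_atTop (Nat.frequently_atTop_iff_infinite.mpr hinf)
    have htr : Tendsto (fun k => tripleSmul g (x, y (φ k), w)) atTop
        (𝓝 (tripleSmul g (x, x, w))) := by
      apply ((hTcont g).tendsto _).comp
      exact tendsto_const_nhds.prodMk_nhds
        ((hytend.comp hφ.tendsto_atTop).prodMk_nhds tendsto_const_nhds)
    have hmem : tripleSmul g (x, x, w) ∈ K :=
      hKclosed.mem_of_tendsto htr (Filter.Eventually.of_forall fun k => by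
        have := hh (φ k)
        rwa [hφg k] at this)
    exact (hKD hmem).1 rfl
  obtain ⟨φ₀, hφ₀mono, hφ₀inj⟩ := auxInjSubseq h hrange
  obtain ⟨⟨b, a₁, a₂⟩, habK, φ₁, hφ₁mono, hconv⟩ :=
    hKcomp.tendsto_subseq (x := fun k => tripleSmul (h (φ₀ k)) (x, y (φ₀ k), w))
      (fun k => hh (φ₀ k))
  set g' : ℕ → G := fun k => h (φ₀ (φ₁ k)) with hg'
  set u' : ℕ → T := fun k => y (φ₀ (φ₁ k)) with hu'
  have ginj : Function.Injective g' := fun m n hmn => hφ₁mono.injective (hφ₀inj hmn)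
  have hb : Tendsto (fun k => g' k • x) atTop (𝓝 b) :=
    (continuous_fst.tendsto _).comp hconv
  have ha1 : Tendsto (fun k => g' k • u' k) atTop (𝓝 a₁) :=
    ((continuous_fst.comp continuous_snd).tendsto _).comp hconv
  have ha2 : Tendsto (fun k => g' k • w) atTop (𝓝 a₂) :=
    ((continuous_snd.comp continuous_snd).tendsto _).comp hconv
  have hdist := hKD habK
  have hba1 : b ≠ a₁ := hdist.1
  have hba2 : b ≠ a₂ := hdist.2.1
  have ha12 : a₁ ≠ a₂ := hdist.2.2
  have hutend : Tendsto u' atTop (𝓝 x) :=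
    hytend.comp ((hφ₀mono.comp hφ₁mono).tendsto_atTop)
  have hP : ∀ L1 L2 : Set (T × T × T), L1 ⊆ distinctTriples T →
      L2 ⊆ distinctTriples T → IsCompact L1 → IsCompact L2 →
      ∀ᶠ k in atTop, tripleSmul (g' k) '' L1 ∩ L2 = ∅ := by
    intro L1 L2 hs1 hs2 hc1 hc2
    have hfin := h3 L1 L2 hs1 hs2 hc1 hc2
    have hfin2 : {k : ℕ | g' k ∈ {g : G | (tripleSmul g '' L1 ∩ L2).Nonempty}}.Finite :=
      hfin.preimage ginj.injOn
    have hev := Set.Finite.eventually_cofinite_notMem hfin2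
    rw [Nat.cofinite_eq_atTop] at hev
    filter_upwards [hev] with k hk
    exact Set.not_nonempty_iff_eq_empty.mp hk
  have hnbhd : ∀ τ : T × T × T, τ ∈ distinctTriples T →
      ∃ L : Set (T × T × T), IsCompact L ∧ L ⊆ distinctTriples T ∧ L ∈ 𝓝 τ := by
    intro τ hτ
    obtain ⟨L, hLc, hτint, hLsub⟩ := exists_compact_subset hDopen hτ
    exact ⟨L, hLc, hLsub, mem_interior_iff_mem_nhds.mp hτint⟩
  have hmain : ∀ z : T, z ≠ x → Tendsto (fun k => g' k • z) atTop (𝓝 a₂) := by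
    intro z hzx
    by_cases hzw : z = w
    · rw [hzw]; exact ha2
    by_contra hnot
    rw [tendsto_nhds] at hnot
    push_neg at hnot
    obtain ⟨V, hVopen, hVa, hfreq⟩ := hnot
    have hVc : IsCompact (Vᶜ : Set T) := hVopen.isClosed_compl.isCompact
    have hfreq' : ∃ᶠ k in atTop, (fun n => g' n • z) k ∈ (Vᶜ : Set T) :=
      Filter.not_eventually.mp hfreq
    obtain ⟨c, hcV, ψ, hψmono, hcz⟩ := hVc.tendsto_subseq' hfreq'
    have hca2 : c ≠ a₂ := fun hEq => hcV (hEq ▸ hVa)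
    have hbψ : Tendsto (fun k => g' (ψ k) • x) atTop (𝓝 b) :=
      hb.comp hψmono.tendsto_atTop
    have ha1ψ : Tendsto (fun k => g' (ψ k) • u' (ψ k)) atTop (𝓝 a₁) :=
      ha1.comp hψmono.tendsto_atTop
    have ha2ψ : Tendsto (fun k => g' (ψ k) • w) atTop (𝓝 a₂) :=
      ha2.comp hψmono.tendsto_atTop
    by_cases hcb : c = b
    · have hczb : Tendsto (fun k => g' (ψ k) • z) atTop (𝓝 b) := by
        have h1 : Tendsto (fun k => g' (ψ k) • z) atTop (𝓝 c) := hcz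
        rwa [hcb] at h1
      -- z collapses to b : contradiction via the moving triples (z, u' (ψ (k+K0)), w)
      have hWmem : ({z}ᶜ ∩ {w}ᶜ : Set T) ∈ 𝓝 x := by
        refine Filter.inter_mem ?_ ?_
        · exact isClosed_singleton.isOpen_compl.mem_nhds
            (Set.mem_compl_singleton_iff.mpr (Ne.symm hzx))
        · exact isClosed_singleton.isOpen_compl.mem_nhds
            (Set.mem_compl_singleton_iff.mpr (Ne.symm hwx))
      have hWev : ∀ᶠ k in atTop, u' (ψ k) ∈ ({z}ᶜ ∩ {w}ᶜ : Set T) :=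
        (hutend.comp hψmono.tendsto_atTop).eventually_mem hWmem
      obtain ⟨K0, hK0⟩ := Filter.eventually_atTop.mp hWev
      have hvtend : Tendsto (fun k => u' (ψ (k + K0))) atTop (𝓝 x) :=
        (hutend.comp hψmono.tendsto_atTop).comp (tendsto_add_atTop_nat K0)
      have hCc : IsCompact (insert x (Set.range fun k => u' (ψ (k + K0)))) :=
        hvtend.isCompact_insert_range
      have hCz : ∀ t ∈ insert x (Set.range fun k => u' (ψ (k + K0))), t ≠ z ∧ t ≠ w := by
        intro t ht
        rcases Set.mem_insert_iff.mp ht with rfl | ⟨k, rfl⟩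
        · exact ⟨Ne.symm hzx, Ne.symm hwx⟩
        · have hmem := hK0 (k + K0) (Nat.le_add_left K0 k)
          exact ⟨Set.mem_compl_singleton_iff.mp hmem.1,
            Set.mem_compl_singleton_iff.mp hmem.2⟩
      have hL1c : IsCompact ((fun t : T => (z, t, w)) ''
          insert x (Set.range fun k => u' (ψ (k + K0)))) :=
        hCc.image (continuous_const.prodMk (continuous_id.prodMk continuous_const))
      have hL1D : ((fun t : T => (z, t, w)) ''
          insert x (Set.range fun k => u' (ψ (k + K0)))) ⊆ distinctTriples T := by
        rintro p ⟨t, ht, rfl⟩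
        exact ⟨Ne.symm (hCz t ht).1, hzw, (hCz t ht).2⟩
      obtain ⟨L2, hL2c, hL2D, hL2n⟩ := hnbhd (b, a₁, a₂) hdist
      have hA : Tendsto (fun k => g' (ψ (k + K0)) • z) atTop (𝓝 b) :=
        hczb.comp (tendsto_add_atTop_nat K0)
      have hB : Tendsto (fun k => g' (ψ (k + K0)) • u' (ψ (k + K0))) atTop (𝓝 a₁) :=
        ha1ψ.comp (tendsto_add_atTop_nat K0)
      have hC : Tendsto (fun k => g' (ψ (k + K0)) • w) atTop (𝓝 a₂) :=
        ha2ψ.comp (tendsto_add_atTop_nat K0)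
      have htr : Tendsto (fun k => tripleSmul (g' (ψ (k + K0))) (z, u' (ψ (k + K0)), w))
          atTop (𝓝 (b, a₁, a₂)) :=
        hA.prodMk_nhds (hB.prodMk_nhds hC)
      have hev2 : ∀ᶠ k in atTop,
          tripleSmul (g' (ψ (k + K0))) (z, u' (ψ (k + K0)), w) ∈ L2 :=
        htr.eventually_mem hL2n
      have hevP : ∀ᶠ k in atTop, tripleSmul (g' (ψ (k + K0))) ''
          ((fun t : T => (z, t, w)) '' insert x (Set.range fun k => u' (ψ (k + K0)))) ∩ L2 = ∅ :=
        (hψmono.tendsto_atTop.comp (tendsto_add_atTop_nat K0)).eventually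
          (hP _ L2 hL1D hL2D hL1c hL2c)
      obtain ⟨k, hk1, hk2⟩ := (hev2.and hevP).exists
      refine (Set.eq_empty_iff_forall_notMem.mp hk2)
        (tripleSmul (g' (ψ (k + K0))) (z, u' (ψ (k + K0)), w)) ⟨?_, hk1⟩
      refine Set.mem_image_of_mem _ (Set.mem_image_of_mem _ ?_)
      exact Set.mem_insert_iff.mpr (Or.inr ⟨k, rfl⟩)
    · -- c ∉ {b, a₂} : contradiction via the fixed triple (x, z, w)
      have hlimD : (b, c, a₂) ∈ distinctTriples T :=
        ⟨fun hEq => hcb hEq.symm, hba2, hca2⟩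
      obtain ⟨L2, hL2c, hL2D, hL2n⟩ := hnbhd _ hlimD
      have hL1D : ({((x, z, w) : T × T × T)} : Set (T × T × T)) ⊆ distinctTriples T := by
        intro p hp
        rw [Set.mem_singleton_iff] at hp
        subst hp
        exact ⟨Ne.symm hzx, Ne.symm hwx, hzw⟩
      have htr : Tendsto (fun k => tripleSmul (g' (ψ k)) (x, z, w)) atTop
          (𝓝 (b, c, a₂)) := by
        have h1 : Tendsto (fun k => g' (ψ k) • z) atTop (𝓝 c) := hcz
        exact hbψ.prodMk_nhds (h1.prodMk_nhds ha2ψ)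
      have hev2 : ∀ᶠ k in atTop, tripleSmul (g' (ψ k)) (x, z, w) ∈ L2 :=
        htr.eventually_mem hL2n
      have hevP : ∀ᶠ k in atTop,
          tripleSmul (g' (ψ k)) '' {((x, z, w) : T × T × T)} ∩ L2 = ∅ :=
        hψmono.tendsto_atTop.eventually (hP _ L2 hL1D hL2D isCompact_singleton hL2c)
      obtain ⟨k, hk1, hk2⟩ := (hev2.and hevP).exists
      exact (Set.eq_empty_iff_forall_notMem.mp hk2)
        (tripleSmul (g' (ψ k)) (x, z, w)) ⟨Set.mem_image_of_mem _ rfl, hk1⟩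
  exact ⟨g', a₂, b, ginj, Ne.symm hba2, hmain, hb⟩
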